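/- For s̃' = s_{t+1} (the observed outcome), the counterfactual probability P̃(s_{t+1}|s̃,ã) over any consistent θ is at most min(P(s_{t+1}|s_t,a_t), P(s_{t+1}|s̃,ã)) / P(s_{t+1}|s_t,a_t). -/
import Mathlib

theorem cf_prob_observed_outcome_ub {S A U : Type*} [Fintype S] [Fintype A] [Fintype U]
    [DecidableEq S]
    (f : S → A → U → S) (θ : U → ℝ)
    (hθ0 : ∀ u, 0 ≤ θ u) (hθsum : ∑ u, θ u = 1)
    (P : S → S → A → ℝ)
    (hcons : ∀ s a s', ∑ u ∈ Finset.univ.filter (fun u => f s a u = s'), θ u = P s' s a)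
    (st st1 sc : S) (a_t ac : A)
    (hpos : 0 < P st1 st a_t) :
    (∑ u ∈ Finset.univ.filter (fun u => f sc ac u = st1 ∧ f st a_t u = st1), θ u)
        / P st1 st a_t
      ≤ min (P st1 st a_t) (P st1 sc ac) / P st1 st a_t := by
  gcongr
  rw [le_min_iff]
  constructor
  · rw [← hcons st a_t st1]
    apply Finset.sum_le_sum_of_subset_of_nonneg
    · intro u hu
      simp only [Finset.mem_filter, Finset.mem_univ, true_and] at *
      exact hu.2
    · intro u _ _; exact hθ0 u
  · rw [← hcons sc ac st1]
    apply Finset.sum_le_sum_of_subset_of_nonneg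
    · intro u hu
      simp only [Finset.mem_filter, Finset.mem_univ, true_and] at *
      exact hu.1
    · intro u _ _; exact hθ0 u
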